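/- With P_m as above, the sequence of probabilities Q_m = Σ_{n even} P_m(n) (probability of an even well, i.e. ferromagnetic) does not converge as m → ∞: along even m it tends to 1 and along odd m it tends to 0. -/

import Mathlib

theorem stmt_10 (cε : ℝ) (hc : 0 < cε)
    (β : ℕ → ℝ) (hβ : ∀ m, β m = cε * (2 / 3) * (Real.log 3 / Real.log 2) * 6 ^ m)
    (f : ℕ → ℕ → ℝ) (hf : ∀ m n, f m n = 3 * β m / 2 ^ (n + 1) + cε * 3 ^ n)
    (P : ℕ → ℕ → ℝ)
    (hP : ∀ m n, P m n = Real.exp (-f m n) / (∑' k : ℕ, Real.exp (-f m k)))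
    (Q : ℕ → ℝ) (hQ : ∀ m, Q m = ∑' n : ℕ, if Even n then P m n else 0) :
    Filter.Tendsto (fun m : ℕ => Q (2 * m)) Filter.atTop (nhds 1) ∧
    Filter.Tendsto (fun m : ℕ => Q (2 * m + 1)) Filter.atTop (nhds 0) ∧
    ¬ ∃ L : ℝ, Filter.Tendsto Q Filter.atTop (nhds L) := by
  classical
  have hlog2 : (0:ℝ) < Real.log 2 := Real.log_pos (by norm_num)
  set L : ℝ := Real.log 3 / Real.log 2 with hLdef
  have hL1 : 1 < L := by
    rw [hLdef, lt_div_iff₀ hlog2, one_mul]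
    exact Real.log_lt_log (by norm_num) (by norm_num)
  have hL2 : L < 2 := by
    rw [hLdef, div_lt_iff₀ hlog2]
    have h4 : Real.log 3 < Real.log 4 := Real.log_lt_log (by norm_num) (by norm_num)
    have h42 : Real.log 4 = 2 * Real.log 2 := by
      rw [show (4:ℝ) = 2 ^ 2 by norm_num, Real.log_pow]; push_cast; ring
    linarith
  -- convenient formula for f
  have hf' : ∀ m n, f m n = cε * (L * 6 ^ m / 2 ^ n + 3 ^ n) := by
    intro m n
    rw [hf, hβ, pow_succ]
    have h2 : ((2:ℝ) ^ n) ≠ 0 := by positivity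
    field_simp
  have h6 : ∀ k : ℕ, (6:ℝ) ^ k = 3 ^ k * 2 ^ k := by
    intro k; rw [← mul_pow]; norm_num
  -- single-step growth away from the well at n = m
  have step_up : ∀ m n, m ≤ n → f m n + cε * 3 ^ m ≤ f m (n + 1) := by
    intro m n hmn
    rw [hf' m n, hf' m (n + 1)]
    have h2 : (2:ℝ) ^ m ≤ 2 ^ n := pow_le_pow_right₀ (by norm_num) hmn
    have h3 : (3:ℝ) ^ m ≤ 3 ^ n := pow_le_pow_right₀ (by norm_num) hmn
    have h2m : (0:ℝ) < 2 ^ m := by positivity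
    have key : L * 6 ^ m / 2 ^ (n + 1) ≤ 3 ^ n := by
      rw [pow_succ, h6, div_le_iff₀ (by positivity)]
      have hmul : (3:ℝ) ^ m * 2 ^ m ≤ 3 ^ n * 2 ^ n :=
        mul_le_mul h3 h2 h2m.le (by positivity)
      nlinarith [mul_le_mul_of_nonneg_right hL2.le (by positivity : (0:ℝ) ≤ 3 ^ m * 2 ^ m)]
    have hhalf : L * 6 ^ m / 2 ^ n = 2 * (L * 6 ^ m / 2 ^ (n + 1)) := by
      rw [pow_succ]; field_simp
    rw [hhalf]
    have e3 : (3:ℝ) ^ (n + 1) = 3 ^ n * 3 := pow_succ 3 n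
    nlinarith [mul_le_mul_of_nonneg_left key hc.le, mul_le_mul_of_nonneg_left h3 hc.le]
  have step_down : ∀ m n, n + 1 ≤ m → f m (n + 1) + cε * 3 ^ m / 3 ≤ f m n := by
    intro m n hnm
    rw [hf' m n, hf' m (n + 1)]
    have h2 : (2:ℝ) ^ (n + 1) ≤ 2 ^ m := pow_le_pow_right₀ (by norm_num) hnm
    have h3 : (3:ℝ) ^ (n + 1) ≤ 3 ^ m := pow_le_pow_right₀ (by norm_num) hnm
    have h2n : (0:ℝ) < 2 ^ (n + 1) := by positivity
    have h3m : (0:ℝ) < 3 ^ m := by positivity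
    have key : (3:ℝ) ^ m ≤ L * 6 ^ m / 2 ^ (n + 1) := by
      rw [h6, le_div_iff₀ h2n]
      have hmul : (3:ℝ) ^ m * 2 ^ (n + 1) ≤ 3 ^ m * 2 ^ m :=
        mul_le_mul_of_nonneg_left h2 h3m.le
      nlinarith [mul_le_mul_of_nonneg_right hL1.le (by positivity : (0:ℝ) ≤ 3 ^ m * 2 ^ m)]
    have hhalf : L * 6 ^ m / 2 ^ n = 2 * (L * 6 ^ m / 2 ^ (n + 1)) := by
      rw [pow_succ]; field_simp
    rw [hhalf]
    have e3 : (3:ℝ) ^ (n + 1) = 3 ^ n * 3 := pow_succ 3 n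
    nlinarith [mul_le_mul_of_nonneg_left key hc.le, mul_le_mul_of_nonneg_left h3 hc.le]
  have h3mpos : ∀ m : ℕ, (0:ℝ) < 3 ^ m := fun m => by positivity
  -- iterated growth
  have up : ∀ m k, f m m + k * (cε * 3 ^ m / 3) ≤ f m (m + k) := by
    intro m k
    induction k with
    | zero => simp
    | succ k ih =>
      have hs := step_up m (m + k) (Nat.le_add_right m k)
      have hd : cε * 3 ^ m / 3 ≤ cε * 3 ^ m := by
        nlinarith [mul_pos hc (h3mpos m)]
      push_cast
      have heq : m + (k + 1) = (m + k) + 1 := by omega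
      rw [heq]
      push_cast at ih
      linarith
  have down : ∀ m k, k ≤ m → f m m + k * (cε * 3 ^ m / 3) ≤ f m (m - k) := by
    intro m k
    induction k with
    | zero => intro _; simp
    | succ k ih =>
      intro hk
      have h1 := ih (by omega)
      have h2 := step_down m (m - (k + 1)) (by omega)
      have he : m - (k + 1) + 1 = m - k := by omega
      rw [he] at h2
      push_cast
      push_cast at h1
      linarith
  -- notation
  set r : ℕ → ℝ := fun m => Real.exp (-(cε * 3 ^ m / 3)) with hrdef
  set r0 : ℝ := Real.exp (-(cε / 3)) with hr0def
  have hr0pos : 0 < r0 := Real.exp_pos _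
  have hr0lt : r0 < 1 := by
    rw [hr0def, ← Real.exp_zero]
    exact Real.exp_lt_exp.2 (by nlinarith)
  have hrpos : ∀ m, 0 < r m := fun m => Real.exp_pos _
  have hrle : ∀ m, r m ≤ r0 := by
    intro m
    apply Real.exp_le_exp.2
    have h1 : (1:ℝ) ≤ 3 ^ m := one_le_pow₀ (by norm_num)
    nlinarith
  -- exponential bounds on the Boltzmann weights
  have bound_up : ∀ m k, Real.exp (-f m (m + k)) ≤ Real.exp (-f m m) * r m ^ k := by
    intro m k
    have h := up m k
    calc Real.exp (-f m (m + k)) ≤ Real.exp (-(f m m + k * (cε * 3 ^ m / 3))) :=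
          Real.exp_le_exp.2 (by linarith)
      _ = Real.exp (-f m m) * r m ^ k := by
          rw [hrdef]
          rw [show -(f m m + (k:ℝ) * (cε * 3 ^ m / 3)) = -f m m + (k:ℝ) * (-(cε * 3 ^ m / 3)) by ring,
            Real.exp_add, Real.exp_nat_mul]
  have bound_down : ∀ m k, k ≤ m → Real.exp (-f m (m - k)) ≤ Real.exp (-f m m) * r m ^ k := by
    intro m k hk
    have h := down m k hk
    calc Real.exp (-f m (m - k)) ≤ Real.exp (-(f m m + k * (cε * 3 ^ m / 3))) :=
          Real.exp_le_exp.2 (by linarith)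
      _ = Real.exp (-f m m) * r m ^ k := by
          rw [hrdef]
          rw [show -(f m m + (k:ℝ) * (cε * 3 ^ m / 3)) = -f m m + (k:ℝ) * (-(cε * 3 ^ m / 3)) by ring,
            Real.exp_add, Real.exp_nat_mul]
  -- summability
  have hβ0 : ∀ m, 0 ≤ β m := by
    intro m
    rw [hβ]
    have hlog3 : 0 ≤ Real.log 3 := Real.log_nonneg (by norm_num)
    exact mul_nonneg (mul_nonneg (by positivity) (div_nonneg hlog3 hlog2.le)) (by positivity)
  have hfge : ∀ m n, cε * n ≤ f m n := by
    intro m n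
    rw [hf]
    have h1 : (0:ℝ) ≤ 3 * β m / 2 ^ (n + 1) :=
      div_nonneg (by linarith [hβ0 m]) (by positivity)
    have h2 : (n:ℝ) ≤ 3 ^ n := by
      have hn := (Nat.lt_two_pow_self (n := n)).le
      have hn' : (n:ℝ) ≤ (2:ℝ) ^ n := by exact_mod_cast hn
      have : (2:ℝ) ^ n ≤ 3 ^ n := pow_le_pow_left₀ (by norm_num) (by norm_num) n
      linarith
    nlinarith
  have hsum : ∀ m, Summable fun n => Real.exp (-f m n) := by
    intro m
    apply Summable.of_nonneg_of_le (fun n => (Real.exp_pos _).le)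
      (fun n => ?_) (summable_geometric_of_lt_one (Real.exp_nonneg _)
        (by rw [← Real.exp_zero]; exact Real.exp_lt_exp.2 (by linarith) : Real.exp (-cε) < 1))
    have : Real.exp (-f m n) ≤ Real.exp (-(cε * n)) :=
      Real.exp_le_exp.2 (by have := hfge m n; linarith)
    calc Real.exp (-f m n) ≤ Real.exp (-(cε * n)) := this
      _ = Real.exp (-cε) ^ n := by
          rw [show -(cε * (n:ℝ)) = (n:ℝ) * (-cε) by ring, Real.exp_nat_mul]
  set Z : ℕ → ℝ := fun m => ∑' k : ℕ, Real.exp (-f m k) with hZdef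
  have hZge : ∀ m, Real.exp (-f m m) ≤ Z m := fun m =>
    Summable.le_tsum (hsum m) m (fun j _ => (Real.exp_pos _).le)
  have hZpos : ∀ m, 0 < Z m := fun m => lt_of_lt_of_le (Real.exp_pos _) (hZge m)
  have hPsummable : ∀ m, Summable (P m) := by
    intro m
    have : Summable fun n => Real.exp (-f m n) / Z m := (hsum m).div_const _
    apply this.congr
    intro n; rw [hP]
  have hPtsum : ∀ m, ∑' n, P m n = 1 := by
    intro m
    have : ∑' n, P m n = (∑' n, Real.exp (-f m n)) / Z m := by
      rw [← tsum_div_const]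
      exact tsum_congr fun n => by rw [hP]
    rw [this]
    exact div_self (hZpos m).ne'
  have hPnonneg : ∀ m n, 0 ≤ P m n := by
    intro m n; rw [hP]
    exact div_nonneg (Real.exp_nonneg _) (hZpos m).le
  have hPle1 : ∀ m, P m m ≤ 1 := by
    intro m; rw [hP]
    exact (div_le_one (hZpos m)).2 (hZge m)
  -- the tail estimate
  set ε : ℕ → ℝ := fun m => 2 * (r m * (1 - r0)⁻¹) with hεdef
  have hεnonneg : ∀ m, 0 ≤ ε m := by
    intro m
    have : (0:ℝ) ≤ (1 - r0)⁻¹ := by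
      apply inv_nonneg.2; linarith
    positivity
  have geom_bound : ∀ m, ∑ j ∈ Finset.range m, r0 ^ j ≤ (1 - r0)⁻¹ := by
    intro m
    calc ∑ j ∈ Finset.range m, r0 ^ j ≤ ∑' j : ℕ, r0 ^ j :=
          Summable.sum_le_tsum _ (fun i _ => by positivity)
            (summable_geometric_of_lt_one hr0pos.le hr0lt)
      _ = (1 - r0)⁻¹ := tsum_geometric_of_lt_one hr0pos.le hr0lt
  have tailA : ∀ m, ∑ i ∈ Finset.range m, Real.exp (-f m i) ≤
      Real.exp (-f m m) * (r m * (1 - r0)⁻¹) := by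
    intro m
    have h1 : ∑ i ∈ Finset.range m, Real.exp (-f m i) ≤
        ∑ i ∈ Finset.range m, Real.exp (-f m m) * r m ^ (m - i) := by
      apply Finset.sum_le_sum
      intro i hi
      have hi' : i < m := Finset.mem_range.1 hi
      have := bound_down m (m - i) (by omega)
      rwa [show m - (m - i) = i by omega] at this
    have h2 : ∑ i ∈ Finset.range m, Real.exp (-f m m) * r m ^ (m - i) =
        Real.exp (-f m m) * ∑ i ∈ Finset.range m, r m ^ (m - i) := by
      rw [Finset.mul_sum]
    have h3 : ∑ i ∈ Finset.range m, r m ^ (m - i) = ∑ j ∈ Finset.range m, r m ^ (j + 1) := by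
      rw [← Finset.sum_range_reflect (fun j => r m ^ (j + 1)) m]
      exact Finset.sum_congr rfl fun i hi => by
        have := Finset.mem_range.1 hi
        congr 1
        omega
    have h4 : ∑ j ∈ Finset.range m, r m ^ (j + 1) ≤ r m * (1 - r0)⁻¹ := by
      calc ∑ j ∈ Finset.range m, r m ^ (j + 1) ≤ ∑ j ∈ Finset.range m, r m * r0 ^ j := by
            apply Finset.sum_le_sum
            intro j _
            rw [pow_succ']
            exact mul_le_mul_of_nonneg_left (pow_le_pow_left₀ (hrpos m).le (hrle m) j) (hrpos m).le
        _ = r m * ∑ j ∈ Finset.range m, r0 ^ j := by rw [Finset.mul_sum]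
        _ ≤ r m * (1 - r0)⁻¹ := mul_le_mul_of_nonneg_left (geom_bound m) (hrpos m).le
    calc ∑ i ∈ Finset.range m, Real.exp (-f m i)
        ≤ Real.exp (-f m m) * ∑ i ∈ Finset.range m, r m ^ (m - i) := by rw [← h2]; exact h1
      _ = Real.exp (-f m m) * ∑ j ∈ Finset.range m, r m ^ (j + 1) := by rw [h3]
      _ ≤ Real.exp (-f m m) * (r m * (1 - r0)⁻¹) :=
          mul_le_mul_of_nonneg_left h4 (Real.exp_nonneg _)
  have tailB : ∀ m, ∑' i : ℕ, Real.exp (-f m (i + (m + 1))) ≤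
      Real.exp (-f m m) * (r m * (1 - r0)⁻¹) := by
    intro m
    have hS1 : Summable fun i : ℕ => Real.exp (-f m (i + (m + 1))) :=
      (summable_nat_add_iff (f := fun n => Real.exp (-f m n)) (m + 1)).2 (hsum m)
    have hS2 : Summable fun i : ℕ => Real.exp (-f m m) * r m * r0 ^ i :=
      (summable_geometric_of_lt_one hr0pos.le hr0lt).mul_left _
    have hle : ∀ i : ℕ, Real.exp (-f m (i + (m + 1))) ≤ Real.exp (-f m m) * r m * r0 ^ i := by
      intro i
      have := bound_up m (i + 1)
      rw [show m + (i + 1) = i + (m + 1) by omega] at this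
      calc Real.exp (-f m (i + (m + 1))) ≤ Real.exp (-f m m) * r m ^ (i + 1) := this
        _ = Real.exp (-f m m) * r m * r m ^ i := by rw [pow_succ']; ring
        _ ≤ Real.exp (-f m m) * r m * r0 ^ i := by
            apply mul_le_mul_of_nonneg_left (pow_le_pow_left₀ (hrpos m).le (hrle m) i)
            positivity
    calc ∑' i : ℕ, Real.exp (-f m (i + (m + 1)))
        ≤ ∑' i : ℕ, Real.exp (-f m m) * r m * r0 ^ i := Summable.tsum_le_tsum hle hS1 hS2
      _ = Real.exp (-f m m) * r m * ∑' i : ℕ, r0 ^ i := tsum_mul_left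
      _ = Real.exp (-f m m) * (r m * (1 - r0)⁻¹) := by
          rw [tsum_geometric_of_lt_one hr0pos.le hr0lt]; ring
  have hZtail : ∀ m, Z m - Real.exp (-f m m) ≤ Real.exp (-f m m) * ε m := by
    intro m
    have hsplit := Summable.sum_add_tsum_nat_add (f := fun n => Real.exp (-f m n)) (m + 1) (hsum m)
    rw [Finset.sum_range_succ] at hsplit
    have := tailA m
    have := tailB m
    rw [hεdef]
    have hZeq : Z m = ∑ i ∈ Finset.range m, Real.exp (-f m i) + Real.exp (-f m m)
        + ∑' i : ℕ, Real.exp (-f m (i + (m + 1))) := by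
      rw [hZdef]; dsimp only; linarith [hsplit]
    dsimp only
    linarith [tailA m, tailB m, hZeq]
  have hPlb : ∀ m, 1 - ε m ≤ P m m := by
    intro m
    rw [hP]
    have h1 := hZtail m
    have h2 := hZge m
    have h3 := hεnonneg m
    rw [le_div_iff₀ (hZpos m)]
    nlinarith [mul_le_mul_of_nonneg_right h2 h3]
  have hTail_ub : ∀ m, (∑' n : ℕ, if n = m then 0 else P m n) ≤ ε m := by
    intro m
    have hext := Summable.tsum_eq_add_tsum_ite (hPsummable m) m
    rw [hPtsum m] at hext
    have h := hPlb m
    linarith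
  -- Q bounds
  have hQsummand_nonneg : ∀ m n, 0 ≤ (if Even n then P m n else 0) := by
    intro m n
    split
    · exact hPnonneg m n
    · exact le_rfl
  have hQsummable : ∀ m, Summable fun n => if Even n then P m n else 0 := by
    intro m
    apply Summable.of_nonneg_of_le (hQsummand_nonneg m) (fun n => ?_) (hPsummable m)
    split
    · exact le_rfl
    · exact hPnonneg m n
  have hQle1 : ∀ m, Q m ≤ 1 := by
    intro m
    rw [hQ]
    have hle : ∀ n : ℕ, (if Even n then P m n else 0) ≤ P m n := by
      intro n
      split
      · exact le_rfl
      · exact hPnonneg m n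
    calc ∑' n, (if Even n then P m n else 0) ≤ ∑' n, P m n :=
          Summable.tsum_le_tsum hle (hQsummable m) (hPsummable m)
      _ = 1 := hPtsum m
  have hQnonneg : ∀ m, 0 ≤ Q m := by
    intro m; rw [hQ]; exact tsum_nonneg (hQsummand_nonneg m)
  have hQeven : ∀ m, Even m → 1 - ε m ≤ Q m := by
    intro m hm
    rw [hQ]
    have h := Summable.le_tsum (hQsummable m) m (fun j _ => hQsummand_nonneg m j)
    rw [if_pos hm] at h
    linarith [hPlb m]
  have hQodd : ∀ m, ¬ Even m → Q m ≤ ε m := by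
    intro m hm
    rw [hQ]
    have hsum2 : Summable fun n : ℕ => if n = m then 0 else P m n := by
      apply Summable.of_nonneg_of_le (fun n => ?_) (fun n => ?_) (hPsummable m)
      · split
        · exact le_rfl
        · exact hPnonneg m n
      · split
        · exact hPnonneg m n
        · exact le_rfl
    have hle : ∀ n : ℕ, (if Even n then P m n else 0) ≤ (if n = m then 0 else P m n) := by
      intro n
      by_cases hn : Even n
      · rw [if_pos hn, if_neg (by rintro rfl; exact hm hn)]
      · rw [if_neg hn]
        split
        · exact le_rfl
        · exact hPnonneg m n
    calc ∑' n, (if Even n then P m n else 0) ≤ ∑' n, (if n = m then 0 else P m n) :=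
          Summable.tsum_le_tsum hle (hQsummable m) hsum2
      _ ≤ ε m := hTail_ub m
  have hu : Filter.Tendsto (fun m : ℕ => cε * 3 ^ m / 3) Filter.atTop Filter.atTop :=
    ((tendsto_pow_atTop_atTop_of_one_lt (by norm_num : (1:ℝ) < 3)).const_mul_atTop
      hc).atTop_div_const (by norm_num)
  have hrt : Filter.Tendsto r Filter.atTop (nhds 0) :=
    Real.tendsto_exp_atBot.comp (Filter.tendsto_neg_atBot_iff.mpr hu)
  have hεt : Filter.Tendsto ε Filter.atTop (nhds 0) := by
    rw [hεdef]
    simpa using (hrt.mul_const ((1 - r0)⁻¹)).const_mul 2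
  have htwo : Filter.Tendsto (fun m : ℕ => 2 * m) Filter.atTop Filter.atTop :=
    Filter.tendsto_atTop_mono (fun n => by simp only [id_eq]; omega) Filter.tendsto_id
  have hodd' : Filter.Tendsto (fun m : ℕ => 2 * m + 1) Filter.atTop Filter.atTop :=
    Filter.tendsto_atTop_mono (fun n => by simp only [id_eq]; omega) Filter.tendsto_id
  have hEvenLim : Filter.Tendsto (fun m : ℕ => Q (2 * m)) Filter.atTop (nhds 1) := by
    apply tendsto_of_tendsto_of_tendsto_of_le_of_le
      (g := fun m : ℕ => 1 - ε (2 * m)) (h := fun _ : ℕ => (1:ℝ))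
    · have h2 : Filter.Tendsto (fun m : ℕ => 1 - ε (2 * m)) Filter.atTop (nhds (1 - 0)) :=
        tendsto_const_nhds.sub (hεt.comp htwo)
      simpa using h2
    · exact tendsto_const_nhds
    · intro m; exact hQeven (2 * m) (even_two_mul m)
    · intro m; exact hQle1 (2 * m)
  have hOddLim : Filter.Tendsto (fun m : ℕ => Q (2 * m + 1)) Filter.atTop (nhds 0) := by
    apply tendsto_of_tendsto_of_tendsto_of_le_of_le
      (g := fun _ : ℕ => (0:ℝ)) (h := fun m : ℕ => ε (2 * m + 1))
    · exact tendsto_const_nhds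
    · exact hεt.comp hodd'
    · intro m; exact hQnonneg (2 * m + 1)
    · intro m; exact hQodd (2 * m + 1) (by rw [Nat.even_iff]; omega)
  refine ⟨hEvenLim, hOddLim, ?_⟩
  rintro ⟨l, hl⟩
  have h1 : l = 1 := tendsto_nhds_unique (hl.comp htwo) hEvenLim
  have h0 : l = 0 := tendsto_nhds_unique (hl.comp hodd') hOddLim
  rw [h1] at h0; norm_num at h0
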